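/- An element f ∈ A = MvPolynomial (Fin (2n)) (Polynomial ℂ) is central for the Moyal product if and only if it is constant in the y-variables: (∀ g ∈ A, f ⋆ g = g ⋆ f) ↔ (∀ i ∈ Fin(2n), ∂_i f = 0), i.e. if and only if f lies in the image of ℂ[ℏ] in A. (This is the statement that the center of the Weyl algebra with the (1/ℏ)-rescaled commutator bracket is ℂ[ℏ].) -/

import Mathlib

noncomputable section

/-- The polynomial Weyl algebra carrier: polynomials in `y₀, …, y_{2n−1}` with
coefficients in `ℂ[ℏ]` (where `ℏ = Polynomial.X`). -/
abbrev WeylPoly (n : ℕ) := MvPolynomial (Fin (2*n)) (Polynomial ℂ)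

/-- The standard symplectic matrix `ω̂`: `ω̂(i,j) = 1` if `j = i + n`, `−1` if
`i = j + n`, and `0` otherwise. -/
def omegaHat (n : ℕ) (i j : Fin (2*n)) : ℂ :=
  if (j : ℕ) = (i : ℕ) + n then 1 else if (i : ℕ) = (j : ℕ) + n then -1 else 0

/-- Iterated partial derivative `∂_{v 0} ⋯ ∂_{v (m−1)}`. -/
def multiDeriv {n m : ℕ} (v : Fin m → Fin (2*n)) (f : WeylPoly n) : WeylPoly n :=
  (List.ofFn v).foldr (fun i g => MvPolynomial.pderiv i g) f

/-- The Moyal product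
`f ⋆ g = ∑_{m} (ℏ^m / (2^m m!)) ∑_{i₁,…,i_m} ∑_{j₁,…,j_m} (∏_s ω̂(i_s, j_s)) ·
(∂_{i₁} ⋯ ∂_{i_m} f) · (∂_{j₁} ⋯ ∂_{j_m} g)`; the sum over `m` is truncated at
`totalDegree f`, beyond which all terms vanish. -/
def moyal (n : ℕ) (f g : WeylPoly n) : WeylPoly n :=
  ∑ m ∈ Finset.range (f.totalDegree + 1),
    MvPolynomial.C (Polynomial.C (1 / ((2:ℂ)^m * (Nat.factorial m : ℂ))) * Polynomial.X ^ m) *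
      ∑ v : Fin m → Fin (2*n), ∑ w : Fin m → Fin (2*n),
        MvPolynomial.C (Polynomial.C (∏ s : Fin m, omegaHat n (v s) (w s))) *
          (multiDeriv v f * multiDeriv w g)

open MvPolynomial

lemma multiDeriv_zero' {n : ℕ} (v : Fin 0 → Fin (2*n)) (f : WeylPoly n) : multiDeriv v f = f := rfl

lemma multiDeriv_succ' {n m : ℕ} (v : Fin (m+1) → Fin (2*n)) (f : WeylPoly n) :
    multiDeriv v f = pderiv (v 0) (multiDeriv (v ∘ Fin.succ) f) := by
  simp only [multiDeriv, List.ofFn_succ, List.foldr_cons]; rfl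

lemma multiDeriv_eq_zero' {n : ℕ} {f : WeylPoly n} (h : ∀ i, pderiv i f = 0)
    {m : ℕ} (v : Fin (m+1) → Fin (2*n)) : multiDeriv v f = 0 := by
  induction m with
  | zero => rw [multiDeriv_succ', multiDeriv_zero']; exact h _
  | succ k ih => rw [multiDeriv_succ', ih]; simp

lemma multiDeriv_X' {n : ℕ} (w : Fin 1 → Fin (2*n)) (j : Fin (2*n)) :
    multiDeriv w (X j : WeylPoly n) = if w 0 = j then 1 else 0 := by
  rw [multiDeriv_succ', multiDeriv_zero', pderiv_X]
  by_cases h : w 0 = j <;> simp [h, Pi.single_apply]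

lemma multiDeriv_X_zero' {n m : ℕ} (w : Fin (m+2) → Fin (2*n)) (j : Fin (2*n)) :
    multiDeriv w (X j : WeylPoly n) = 0 := by
  induction m with
  | zero =>
      rw [multiDeriv_succ']
      rw [show multiDeriv (w ∘ Fin.succ) (X j : WeylPoly n) = _ from multiDeriv_X' _ j]
      split <;> simp [pderiv_one]
  | succ k ih => rw [multiDeriv_succ', ih]; simp

example (n : ℕ) (f g : WeylPoly n) :
    (C (Polynomial.C (1/((2:ℂ)^0 * (Nat.factorial 0 : ℂ))) * Polynomial.X^0) : WeylPoly n) *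
      ∑ v : Fin 0 → Fin (2*n), ∑ w : Fin 0 → Fin (2*n),
        C (Polynomial.C (∏ s : Fin 0, omegaHat n (v s) (w s))) *
          (multiDeriv v f * multiDeriv w g) = f * g := by
  simp [multiDeriv_zero', Finset.univ_unique]

lemma moyal_left_const {n : ℕ} (f g : WeylPoly n) (h : ∀ i, pderiv i f = 0) :
    moyal n f g = f * g := by
  unfold moyal
  rw [Finset.sum_eq_single_of_mem 0 (Finset.mem_range.mpr (Nat.succ_pos _))]
  · simp [multiDeriv_zero', Finset.univ_unique]
  · intro m _ hm
    obtain ⟨k, rfl⟩ := Nat.exists_eq_succ_of_ne_zero hm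
    simp [multiDeriv_eq_zero' h]

lemma moyal_right_const {n : ℕ} (f g : WeylPoly n) (h : ∀ i, pderiv i f = 0) :
    moyal n g f = g * f := by
  unfold moyal
  rw [Finset.sum_eq_single_of_mem 0 (Finset.mem_range.mpr (Nat.succ_pos _))]
  · simp [multiDeriv_zero', Finset.univ_unique]
  · intro m _ hm
    obtain ⟨k, rfl⟩ := Nat.exists_eq_succ_of_ne_zero hm
    simp [multiDeriv_eq_zero' h]

lemma sum_fun_one {β : Type*} [Fintype β] {M : Type*} [AddCommMonoid M]
    (F : (Fin 1 → β) → M) :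
    ∑ v : Fin 1 → β, F v = ∑ b : β, F (fun _ => b) := by
  apply Fintype.sum_equiv (Equiv.funUnique (Fin 1) β)
  intro v
  congr 1
  funext s
  simp [Equiv.funUnique, Subsingleton.elim s default]

lemma moyal_X_left {n : ℕ} (f : WeylPoly n) (j : Fin (2*n)) :
    moyal n (X j) f = X j * f +
      C (Polynomial.C (1/2 : ℂ) * Polynomial.X) *
        ∑ b, C (Polynomial.C (omegaHat n j b)) * pderiv b f := by
  unfold moyal
  rw [totalDegree_X]
  rw [Finset.sum_range_succ, Finset.sum_range_one]
  refine congrArg₂ (· + ·) ?_ ?_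
  · simp [multiDeriv_zero', Finset.univ_unique]
  · rw [sum_fun_one]
    have h1 : ∀ a : Fin (2*n), ∑ w : Fin 1 → Fin (2*n),
        C (Polynomial.C (∏ s : Fin 1, omegaHat n ((fun _ : Fin 1 => a) s) (w s))) *
          (multiDeriv (fun _ : Fin 1 => a) (X j : WeylPoly n) * multiDeriv w f)
        = ∑ b : Fin (2*n), C (Polynomial.C (omegaHat n a b)) *
            (multiDeriv (fun _ : Fin 1 => a) (X j : WeylPoly n) * pderiv b f) := by
      intro a
      rw [sum_fun_one]
      refine Finset.sum_congr rfl fun b _ => ?_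
      rw [Fin.prod_univ_one]
      rw [multiDeriv_succ', multiDeriv_zero', multiDeriv_succ', multiDeriv_zero']
    simp only [h1]
    have h2 : ∀ a : Fin (2*n), (∑ b, C (Polynomial.C (omegaHat n a b)) *
          (multiDeriv (fun _ : Fin 1 => a) (X j : WeylPoly n) * pderiv b f))
        = if a = j then ∑ b, C (Polynomial.C (omegaHat n j b)) * pderiv b f else 0 := by
      intro a
      by_cases h : a = j
      · subst h; simp [multiDeriv_X']
      · simp [multiDeriv_X', h]
    simp only [h2]
    rw [Finset.sum_ite_eq' Finset.univ j]
    simp only [Finset.mem_univ, if_true]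
    norm_num [Nat.factorial]

lemma moyal_X_right {n : ℕ} (f : WeylPoly n) (j : Fin (2*n)) (hd : f.totalDegree ≠ 0) :
    moyal n f (X j) = f * X j +
      C (Polynomial.C (1/2 : ℂ) * Polynomial.X) *
        ∑ a, C (Polynomial.C (omegaHat n a j)) * pderiv a f := by
  have hsub : Finset.range 2 ⊆ Finset.range (f.totalDegree + 1) :=
    Finset.range_subset_range.mpr (by omega)
  unfold moyal
  rw [← Finset.sum_subset hsub]
  · rw [Finset.sum_range_succ, Finset.sum_range_one]
    refine congrArg₂ (· + ·) ?_ ?_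
    · simp [multiDeriv_zero', Finset.univ_unique]
    · rw [sum_fun_one]
      have h1 : ∀ a : Fin (2*n), ∑ w : Fin 1 → Fin (2*n),
          C (Polynomial.C (∏ s : Fin 1, omegaHat n ((fun _ : Fin 1 => a) s) (w s))) *
            (multiDeriv (fun _ : Fin 1 => a) f * multiDeriv w (X j : WeylPoly n))
          = C (Polynomial.C (omegaHat n a j)) * pderiv a f := by
        intro a
        rw [sum_fun_one]
        have hb : ∀ b : Fin (2*n),
            C (Polynomial.C (∏ s : Fin 1,
                omegaHat n ((fun _ : Fin 1 => a) s) ((fun _ : Fin 1 => b) s))) *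
              (multiDeriv (fun _ : Fin 1 => a) f *
                multiDeriv (fun _ : Fin 1 => b) (X j : WeylPoly n))
            = if b = j then C (Polynomial.C (omegaHat n a j)) * pderiv a f else 0 := by
          intro b
          rw [Fin.prod_univ_one, multiDeriv_succ', multiDeriv_zero', multiDeriv_X']
          by_cases h : b = j
          · subst h; simp
          · simp [h]
        simp only [hb]
        rw [Finset.sum_ite_eq' Finset.univ j]
        simp
      simp only [h1]
      norm_num [Nat.factorial]
  · intro m _ h2
    obtain ⟨k, rfl⟩ : ∃ k, m = k + 2 := ⟨m - 2, by simp at h2; omega⟩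
    simp [multiDeriv_X_zero']

lemma omega_antisymm {n : ℕ} (hn : 1 ≤ n) (i j : Fin (2*n)) :
    omegaHat n j i = - omegaHat n i j := by
  unfold omegaHat
  split_ifs <;> first | (exfalso; omega) | norm_num

/-- An element `f` of the polynomial Weyl algebra is central for the
Moyal product if and only if it is constant in the `y`-variables, i.e. all partial
derivatives `∂_i f` vanish (equivalently, `f` lies in the image of `ℂ[ℏ]`). This is
the statement that the center of the Weyl algebra with the `(1/ℏ)`-rescaled
commutator bracket is `ℂ[ℏ]`. -/
theorem moyal_central_iff (n : ℕ) (hn : 1 ≤ n) (f : WeylPoly n) :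
    (∀ g : WeylPoly n, moyal n f g = moyal n g f)
      ↔ (∀ i : Fin (2*n), MvPolynomial.pderiv i f = 0) := by
  constructor
  · intro hf
    by_cases hd : f.totalDegree = 0
    · intro i
      apply pderiv_eq_zero_of_notMem_vars
      rw [mem_vars]
      rintro ⟨m, hm, him⟩
      have h0 := (totalDegree_eq_zero_iff _ f).mp hd m hm i
      simp only [Finsupp.mem_support_iff] at him
      exact him h0
    · have key : ∀ j : Fin (2*n),
          ∑ a, (C (Polynomial.C (omegaHat n a j)) : WeylPoly n) * pderiv a f = 0 := by
        intro j
        have h := hf (X j)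
        rw [moyal_X_right f j hd, moyal_X_left f j] at h
        set S : WeylPoly n := ∑ a, (C (Polynomial.C (omegaHat n a j)) : WeylPoly n) * pderiv a f with hS
        have hsum : ∑ b, (C (Polynomial.C (omegaHat n j b)) : WeylPoly n) * pderiv b f = -S := by
          rw [hS, ← Finset.sum_neg_distrib]
          refine Finset.sum_congr rfl fun a _ => ?_
          rw [omega_antisymm hn a j]
          push_cast [map_neg]
          ring
        rw [hsum, mul_comm f (X j)] at h
        set c : WeylPoly n := C (Polynomial.C (1/2 : ℂ) * Polynomial.X) with hc
        have h2 : c * S = c * -S := add_left_cancel h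
        have h3 : (2 : WeylPoly n) * (c * S) = 0 := by
          linear_combination h2
        rcases mul_eq_zero.mp h3 with h4 | h4
        · exact absurd h4 two_ne_zero
        rcases mul_eq_zero.mp h4 with h5 | h5
        · exfalso
          rw [hc, MvPolynomial.C_eq_zero] at h5
          exact (mul_ne_zero (by simp) Polynomial.X_ne_zero) h5
        · exact h5
      intro i₀
      by_cases hi : (i₀ : ℕ) < n
      · have hj : (i₀ : ℕ) + n < 2*n := by omega
        have hkey := key ⟨(i₀ : ℕ) + n, hj⟩
        rw [Finset.sum_eq_single i₀] at hkey
        · have hω : omegaHat n i₀ ⟨(i₀ : ℕ) + n, hj⟩ = 1 := by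
            unfold omegaHat
            rw [if_pos (by simp only [Fin.val_mk])]
          rw [hω] at hkey
          simpa using hkey
        · intro b _ hb
          have hb' : (b : ℕ) ≠ (i₀ : ℕ) := fun h => hb (Fin.ext h)
          have hblt : (b : ℕ) < 2*n := b.isLt
          have hω : omegaHat n b ⟨(i₀ : ℕ) + n, hj⟩ = 0 := by
            unfold omegaHat
            rw [if_neg (by simp only [Fin.val_mk]; all_goals omega), if_neg (by simp only [Fin.val_mk]; all_goals omega)]
          rw [hω]; simp
        · simp
      · have hj : (i₀ : ℕ) - n < 2*n := by omega
        have hi₀ : (i₀ : ℕ) < 2*n := i₀.isLt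
        have hkey := key ⟨(i₀ : ℕ) - n, hj⟩
        rw [Finset.sum_eq_single i₀] at hkey
        · have hω : omegaHat n i₀ ⟨(i₀ : ℕ) - n, hj⟩ = -1 := by
            unfold omegaHat
            rw [if_neg (by simp only [Fin.val_mk]; all_goals omega), if_pos (by simp only [Fin.val_mk]; all_goals omega)]
          rw [hω] at hkey
          simp only [map_neg, map_one, neg_mul, one_mul, neg_eq_zero] at hkey
          simpa using hkey
        · intro b _ hb
          have hb' : (b : ℕ) ≠ (i₀ : ℕ) := fun h => hb (Fin.ext h)
          have hblt : (b : ℕ) < 2*n := b.isLt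
          have hω : omegaHat n b ⟨(i₀ : ℕ) - n, hj⟩ = 0 := by
            unfold omegaHat
            rw [if_neg (by simp only [Fin.val_mk]; all_goals omega), if_neg (by simp only [Fin.val_mk]; all_goals omega)]
          rw [hω]; simp
        · simp
  · intro h g
    rw [moyal_left_const f g h, moyal_right_const f g h]
    exact mul_comm f g

end
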